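/- arXiv:0801.0132 — 2 statements merged into one kernel-verified Lean document; each statement's English description precedes it below -/
import Mathlib

section
/- For the δ-interaction creation function: if x₁ > x'₁ > x₂ > x'₂ > … > x'_N > x_{N+1} (interlacing order), then -c·∑_{n<m}^{N+1}|x_n - x_m| + c·∑_{n=1}^{N+1}∑_{m=1}^{N}|x_n - x'_m| - c·∑_{n<m}^{N}|x'_n - x'_m| = 0. -/
open Finset

private lemma cnt_ge (j k : ℕ) (h : j ≤ k) :
    ∑ m ∈ Finset.range k, (if j ≤ m then (1:ℝ) else 0) = (k : ℝ) - j := by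
  induction k with
  | zero =>
    have : j = 0 := Nat.le_zero.mp h
    subst this; simp
  | succ k ih =>
    rw [Finset.sum_range_succ]
    by_cases hj : j ≤ k
    · rw [ih hj, if_pos hj]; push_cast; ring
    · have hj' : j = k + 1 := by omega
      subst hj'
      have hz : ∑ m ∈ Finset.range k, (if k+1 ≤ m then (1:ℝ) else 0) = 0 :=
        Finset.sum_eq_zero (fun i hi => if_neg (by rw [Finset.mem_range] at hi; omega))
      rw [hz, if_neg (by omega)]
      push_cast; ring

private lemma cnt_lt (j k : ℕ) (h : j ≤ k) :
    ∑ m ∈ Finset.range k, (if m < j then (1:ℝ) else 0) = (j : ℝ) := by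
  induction k with
  | zero =>
    have : j = 0 := Nat.le_zero.mp h
    subst this; simp
  | succ k ih =>
    rw [Finset.sum_range_succ]
    by_cases hj : j ≤ k
    · rw [ih hj, if_neg (by omega)]; ring
    · have hj' : j = k + 1 := by omega
      subst hj'
      rw [if_pos (by omega)]
      have : ∑ m ∈ Finset.range k, (if m < k + 1 then (1:ℝ) else 0)
          = ∑ m ∈ Finset.range k, (1:ℝ) := by
        apply Finset.sum_congr rfl
        intro i hi
        rw [Finset.mem_range] at hi
        rw [if_pos (by omega)]
      rw [this, Finset.sum_const, Finset.card_range, nsmul_eq_mul, mul_one]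
      push_cast; ring

theorem stmt_17 (c : ℝ) (N : ℕ) (x : Fin (N + 1) → ℝ) (x' : Fin N → ℝ)
    (hinter : ∀ i : Fin N, x' i < x i.castSucc ∧ x i.succ < x' i) :
    -c * (∑ n : Fin (N + 1), ∑ m : Fin (N + 1), if n < m then |x n - x m| else 0)
      + c * (∑ n : Fin (N + 1), ∑ m : Fin N, |x n - x' m|)
      - c * (∑ n : Fin N, ∑ m : Fin N, if n < m then |x' n - x' m| else 0) = 0 := by
  -- monotonicity
  have hx : StrictAnti x :=
    Fin.strictAnti_iff_succ_lt.mpr fun i => (hinter i).2.trans (hinter i).1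
  have hxx' : ∀ (n : Fin (N+1)) (m : Fin N), (n:ℕ) ≤ (m:ℕ) → x' m < x n := by
    intro n m h
    have h1 : n ≤ m.castSucc := by
      rw [Fin.le_def]; simpa using h
    exact lt_of_lt_of_le (hinter m).1 (hx.antitone h1)
  have hx'x : ∀ (n : Fin (N+1)) (m : Fin N), (m:ℕ) < (n:ℕ) → x n < x' m := by
    intro n m h
    have h1 : m.succ ≤ n := by
      rw [Fin.le_def]; simpa using h
    exact lt_of_le_of_lt (hx.antitone h1) (hinter m).2
  have hx' : StrictAnti x' := by
    intro i j hij
    have h1 : (i:ℕ) < (j.castSucc : ℕ) := by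
      rw [Fin.coe_castSucc]; exact hij
    exact (hinter j).1.trans (hx'x j.castSucc i h1)
  -- remove absolute values
  have hA : (∑ n : Fin (N + 1), ∑ m : Fin (N + 1), if n < m then |x n - x m| else 0)
      = ∑ n : Fin (N + 1), ∑ m : Fin (N + 1), if n < m then x n - x m else 0 := by
    apply Finset.sum_congr rfl; intro n _
    apply Finset.sum_congr rfl; intro m _
    split_ifs with h
    · rw [abs_of_pos (sub_pos.mpr (hx h))]
    · rfl
  have hB : (∑ n : Fin (N + 1), ∑ m : Fin N, |x n - x' m|)
      = ∑ n : Fin (N + 1), ∑ m : Fin N,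
          (if (n:ℕ) ≤ (m:ℕ) then x n - x' m else x' m - x n) := by
    apply Finset.sum_congr rfl; intro n _
    apply Finset.sum_congr rfl; intro m _
    split_ifs with h
    · rw [abs_of_pos (sub_pos.mpr (hxx' n m h))]
    · rw [abs_of_neg (sub_neg.mpr (hx'x n m (by omega)))]; ring
  have hC : (∑ n : Fin N, ∑ m : Fin N, if n < m then |x' n - x' m| else 0)
      = ∑ n : Fin N, ∑ m : Fin N, if n < m then x' n - x' m else 0 := by
    apply Finset.sum_congr rfl; intro n _
    apply Finset.sum_congr rfl; intro m _
    split_ifs with h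
    · rw [abs_of_pos (sub_pos.mpr (hx' h))]
    · rfl
  rw [hA, hB, hC]
  -- counting sums
  have c1 : ∀ n : Fin (N+1), (∑ m : Fin (N+1), if (n:ℕ) < (m:ℕ) then (1:ℝ) else 0)
      = (N:ℝ) - n := by
    intro n
    rw [Fin.sum_univ_eq_sum_range (fun m => if (n:ℕ) < m then (1:ℝ) else 0)]
    simp only [show ∀ m : ℕ, ((n:ℕ) < m ↔ (n:ℕ)+1 ≤ m) from fun m => by omega]
    rw [cnt_ge _ _ (by omega : (n:ℕ)+1 ≤ N+1)]
    push_cast; ring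
  have c2 : ∀ m : Fin (N+1), (∑ n : Fin (N+1), if (n:ℕ) < (m:ℕ) then (1:ℝ) else 0)
      = (m:ℝ) := by
    intro m
    rw [Fin.sum_univ_eq_sum_range (fun n => if n < (m:ℕ) then (1:ℝ) else 0)]
    exact cnt_lt _ _ (by omega)
  have c3 : ∀ n : Fin (N+1), (∑ m : Fin N, if (n:ℕ) ≤ (m:ℕ) then (1:ℝ) else 0)
      = (N:ℝ) - n := by
    intro n
    rw [Fin.sum_univ_eq_sum_range (fun m => if (n:ℕ) ≤ m then (1:ℝ) else 0)]
    by_cases h : (n:ℕ) ≤ N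
    · exact cnt_ge _ _ h
    · omega
  have c4 : ∀ m : Fin N, (∑ n : Fin (N+1), if (n:ℕ) ≤ (m:ℕ) then (1:ℝ) else 0)
      = (m:ℝ) + 1 := by
    intro m
    rw [Fin.sum_univ_eq_sum_range (fun n => if n ≤ (m:ℕ) then (1:ℝ) else 0)]
    simp only [show ∀ k : ℕ, (k ≤ (m:ℕ) ↔ k < (m:ℕ)+1) from fun k => by omega]
    rw [cnt_lt _ _ (by omega : (m:ℕ)+1 ≤ N+1)]
    push_cast; ring
  have c5 : ∀ n : Fin N, (∑ m : Fin N, if (n:ℕ) < (m:ℕ) then (1:ℝ) else 0)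
      = (N:ℝ) - 1 - n := by
    intro n
    rw [Fin.sum_univ_eq_sum_range (fun m => if (n:ℕ) < m then (1:ℝ) else 0)]
    simp only [show ∀ m : ℕ, ((n:ℕ) < m ↔ (n:ℕ)+1 ≤ m) from fun m => by omega]
    rw [cnt_ge _ _ (by omega : (n:ℕ)+1 ≤ N)]
    push_cast; ring
  have c6 : ∀ m : Fin N, (∑ n : Fin N, if (n:ℕ) < (m:ℕ) then (1:ℝ) else 0) = (m:ℝ) := by
    intro m
    rw [Fin.sum_univ_eq_sum_range (fun n => if n < (m:ℕ) then (1:ℝ) else 0)]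
    exact cnt_lt _ _ (by omega)
  -- express each double sum in single-sum form
  have L1 : (∑ n : Fin (N + 1), ∑ m : Fin (N + 1), if n < m then x n - x m else 0)
      = ∑ n : Fin (N + 1), ((N:ℝ) - 2*n) * x n := by
    have e1 : (∑ n : Fin (N + 1), ∑ m : Fin (N + 1), if n < m then x n - x m else 0)
        = (∑ n : Fin (N + 1), ∑ m : Fin (N + 1), if (n:ℕ) < (m:ℕ) then x n else 0)
          - (∑ n : Fin (N + 1), ∑ m : Fin (N + 1), if (n:ℕ) < (m:ℕ) then x m else 0) := by
      rw [← Finset.sum_sub_distrib]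
      apply Finset.sum_congr rfl; intro n _
      rw [← Finset.sum_sub_distrib]
      apply Finset.sum_congr rfl; intro m _
      simp only [Fin.lt_def]
      split_ifs <;> ring
    rw [e1]
    have e2 : (∑ n : Fin (N + 1), ∑ m : Fin (N + 1), if (n:ℕ) < (m:ℕ) then x n else 0)
        = ∑ n : Fin (N + 1), ((N:ℝ) - n) * x n := by
      apply Finset.sum_congr rfl; intro n _
      have : ∀ m : Fin (N+1), (if (n:ℕ) < (m:ℕ) then x n else 0)
          = (if (n:ℕ) < (m:ℕ) then (1:ℝ) else 0) * x n := by
        intro m; split_ifs <;> ring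
      simp only [this]
      rw [← Finset.sum_mul, c1]
    have e3 : (∑ n : Fin (N + 1), ∑ m : Fin (N + 1), if (n:ℕ) < (m:ℕ) then x m else 0)
        = ∑ m : Fin (N + 1), (m:ℝ) * x m := by
      rw [Finset.sum_comm]
      apply Finset.sum_congr rfl; intro m _
      have : ∀ n : Fin (N+1), (if (n:ℕ) < (m:ℕ) then x m else 0)
          = (if (n:ℕ) < (m:ℕ) then (1:ℝ) else 0) * x m := by
        intro n; split_ifs <;> ring
      simp only [this]
      rw [← Finset.sum_mul, c2]
    rw [e2, e3, ← Finset.sum_sub_distrib]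
    apply Finset.sum_congr rfl; intro n _
    ring
  have L3 : (∑ n : Fin N, ∑ m : Fin N, if n < m then x' n - x' m else 0)
      = ∑ m : Fin N, -((2*(m:ℝ) + 1 - N)) * x' m := by
    have e1 : (∑ n : Fin N, ∑ m : Fin N, if n < m then x' n - x' m else 0)
        = (∑ n : Fin N, ∑ m : Fin N, if (n:ℕ) < (m:ℕ) then x' n else 0)
          - (∑ n : Fin N, ∑ m : Fin N, if (n:ℕ) < (m:ℕ) then x' m else 0) := by
      rw [← Finset.sum_sub_distrib]
      apply Finset.sum_congr rfl; intro n _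
      rw [← Finset.sum_sub_distrib]
      apply Finset.sum_congr rfl; intro m _
      simp only [Fin.lt_def]
      split_ifs <;> ring
    rw [e1]
    have e2 : (∑ n : Fin N, ∑ m : Fin N, if (n:ℕ) < (m:ℕ) then x' n else 0)
        = ∑ n : Fin N, ((N:ℝ) - 1 - n) * x' n := by
      apply Finset.sum_congr rfl; intro n _
      have : ∀ m : Fin N, (if (n:ℕ) < (m:ℕ) then x' n else 0)
          = (if (n:ℕ) < (m:ℕ) then (1:ℝ) else 0) * x' n := by
        intro m; split_ifs <;> ring
      simp only [this]
      rw [← Finset.sum_mul, c5]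
    have e3 : (∑ n : Fin N, ∑ m : Fin N, if (n:ℕ) < (m:ℕ) then x' m else 0)
        = ∑ m : Fin N, (m:ℝ) * x' m := by
      rw [Finset.sum_comm]
      apply Finset.sum_congr rfl; intro m _
      have : ∀ n : Fin N, (if (n:ℕ) < (m:ℕ) then x' m else 0)
          = (if (n:ℕ) < (m:ℕ) then (1:ℝ) else 0) * x' m := by
        intro n; split_ifs <;> ring
      simp only [this]
      rw [← Finset.sum_mul, c6]
    rw [e2, e3, ← Finset.sum_sub_distrib]
    apply Finset.sum_congr rfl; intro n _
    ring
  have L2 : (∑ n : Fin (N + 1), ∑ m : Fin N,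
          (if (n:ℕ) ≤ (m:ℕ) then x n - x' m else x' m - x n))
      = (∑ n : Fin (N + 1), ((N:ℝ) - 2*n) * x n)
        - ∑ m : Fin N, (2*(m:ℝ) + 1 - N) * x' m := by
    have e1 : (∑ n : Fin (N + 1), ∑ m : Fin N,
          (if (n:ℕ) ≤ (m:ℕ) then x n - x' m else x' m - x n))
        = (∑ n : Fin (N + 1), ∑ m : Fin N,
            (if (n:ℕ) ≤ (m:ℕ) then (1:ℝ) else -1) * x n)
          - (∑ n : Fin (N + 1), ∑ m : Fin N,
            (if (n:ℕ) ≤ (m:ℕ) then (1:ℝ) else -1) * x' m) := by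
      rw [← Finset.sum_sub_distrib]
      apply Finset.sum_congr rfl; intro n _
      rw [← Finset.sum_sub_distrib]
      apply Finset.sum_congr rfl; intro m _
      split_ifs <;> ring
    rw [e1]
    have sign : ∀ (P : Prop) [Decidable P] (y : ℝ),
        (if P then (1:ℝ) else -1) * y = (2 * (if P then (1:ℝ) else 0) - 1) * y := by
      intro P _ y; split_ifs <;> ring
    have e2 : (∑ n : Fin (N + 1), ∑ m : Fin N,
            (if (n:ℕ) ≤ (m:ℕ) then (1:ℝ) else -1) * x n)
        = ∑ n : Fin (N + 1), ((N:ℝ) - 2*n) * x n := by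
      apply Finset.sum_congr rfl; intro n _
      simp only [sign]
      have : (∑ m : Fin N, (2 * (if (n:ℕ) ≤ (m:ℕ) then (1:ℝ) else 0) - 1) * x n)
          = (2 * (∑ m : Fin N, (if (n:ℕ) ≤ (m:ℕ) then (1:ℝ) else 0)) - N) * x n := by
        have step : (∑ m : Fin N, (2 * (if (n:ℕ) ≤ (m:ℕ) then (1:ℝ) else 0) - 1) * x n)
            = (∑ m : Fin N, (2 * ((if (n:ℕ) ≤ (m:ℕ) then (1:ℝ) else 0) * x n) - x n)) := by
          apply Finset.sum_congr rfl; intro m _; ring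
        rw [step, Finset.sum_sub_distrib, ← Finset.mul_sum, ← Finset.sum_mul,
          Finset.sum_const, Finset.card_univ, Fintype.card_fin, nsmul_eq_mul]
        ring
      rw [this, c3]
      ring
    have e3 : (∑ n : Fin (N + 1), ∑ m : Fin N,
            (if (n:ℕ) ≤ (m:ℕ) then (1:ℝ) else -1) * x' m)
        = ∑ m : Fin N, (2*(m:ℝ) + 1 - N) * x' m := by
      rw [Finset.sum_comm]
      apply Finset.sum_congr rfl; intro m _
      simp only [sign]
      have : (∑ n : Fin (N+1), (2 * (if (n:ℕ) ≤ (m:ℕ) then (1:ℝ) else 0) - 1) * x' m)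
          = (2 * (∑ n : Fin (N+1), (if (n:ℕ) ≤ (m:ℕ) then (1:ℝ) else 0)) - (N+1)) * x' m := by
        have step : (∑ n : Fin (N+1), (2 * (if (n:ℕ) ≤ (m:ℕ) then (1:ℝ) else 0) - 1) * x' m)
            = (∑ n : Fin (N+1), (2 * ((if (n:ℕ) ≤ (m:ℕ) then (1:ℝ) else 0) * x' m) - x' m)) := by
          apply Finset.sum_congr rfl; intro n _; ring
        rw [step, Finset.sum_sub_distrib, ← Finset.mul_sum, ← Finset.sum_mul,
          Finset.sum_const, Finset.card_univ, Fintype.card_fin, nsmul_eq_mul]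
        push_cast; ring
      rw [this, c4]
      ring
    rw [e2, e3]
  rw [L1, L2, L3]
  have : (∑ m : Fin N, -((2*(m:ℝ) + 1 - N)) * x' m)
      = -(∑ m : Fin N, (2*(m:ℝ) + 1 - N) * x' m) := by
    rw [← Finset.sum_neg_distrib]
    apply Finset.sum_congr rfl; intro m _; ring
  rw [this]
  ring
end

section
/- Free fermion creation step: for distinct real k₁,…,k_{N+1} (with appropriate nonvanishing of k_n - k_{N+1}), the iterated integral ∫_{x₂}^{x₁}dx'₁ ⋯ ∫_{x_{N+1}}^{x_N}dx'_N det[e^{i k_n x'_m}]_{1≤n,m≤N} · e^{i k_{N+1}(∑_{n=1}^{N+1} x_n - ∑_{m=1}^{N} x'_m)} equals (∏_{n=1}^{N}(i k_n - i k_{N+1}))^{-1} · det[e^{i k_n x_m}]_{1≤n,m≤N+1}. -/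
open MeasureTheory

section Aux

open Matrix

lemma aux_det_col (N : ℕ) (B : Matrix (Fin (N+1)) (Fin (N+1)) ℂ)
    (hB : ∀ m, B (Fin.last N) m = 1) :
    B.det = (Matrix.of fun n m : Fin N =>
      B n.castSucc m.castSucc - B n.castSucc m.succ).det := by
  classical
  set Sh : Matrix (Fin (N+1)) (Fin (N+1)) ℂ :=
    Matrix.of (fun i j => if (i : ℕ) = (j : ℕ) + 1 then 1 else 0) with hSh
  set T : Matrix (Fin (N+1)) (Fin (N+1)) ℂ := 1 - Sh with hT
  have hTdet : T.det = 1 := by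
    rw [Matrix.det_of_lowerTriangular T]
    · apply Finset.prod_eq_one
      intro i _
      simp [hT, hSh, Matrix.sub_apply, Matrix.one_apply]
    · intro i j hij
      have hij' : i < j := hij
      have h1 : i ≠ j := ne_of_lt hij'
      have hv : (i : ℕ) < (j : ℕ) := hij'
      have h2 : (i : ℕ) ≠ (j : ℕ) + 1 := by omega
      simp [hT, hSh, Matrix.sub_apply, Matrix.one_apply, h1, h2]
  have hBSh1 : ∀ (i : Fin (N+1)) (m : Fin N), (B * Sh) i m.castSucc = B i m.succ := by
    intro i m
    rw [Matrix.mul_apply]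
    rw [Finset.sum_eq_single m.succ]
    · simp [hSh, Fin.val_succ]
    · intro p _ hp
      have : (p : ℕ) ≠ (m : ℕ) + 1 := by
        intro h
        exact hp (Fin.ext (by simpa [Fin.val_succ] using h))
      simp [hSh, this]
    · simp
  have hBSh2 : ∀ (i : Fin (N+1)), (B * Sh) i (Fin.last N) = 0 := by
    intro i
    rw [Matrix.mul_apply]
    apply Finset.sum_eq_zero
    intro p _
    have : (p : ℕ) ≠ N + 1 := by
      have := p.isLt; omega
    simp [hSh, Fin.val_last, this]
  have hBT : ∀ i j, (B * T) i j = B i j - (B * Sh) i j := by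
    intro i j
    rw [hT, Matrix.mul_sub, Matrix.mul_one, Matrix.sub_apply]
  have key : B.det = (B * T).det := by rw [Matrix.det_mul, hTdet, mul_one]
  rw [key, Matrix.det_succ_row (B * T) (Fin.last N)]
  rw [Finset.sum_eq_single (Fin.last N)]
  · have hentry : (B * T) (Fin.last N) (Fin.last N) = 1 := by
      rw [hBT, hBSh2, hB, sub_zero]
    rw [hentry]
    have hpow : ((-1 : ℂ)) ^ ((Fin.last N : ℕ) + (Fin.last N : ℕ)) = 1 := by
      rw [← two_mul]; simp [pow_mul]
    rw [hpow, one_mul, one_mul]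
    congr 1
    ext n m
    simp only [Matrix.submatrix_apply, Fin.succAbove_last, Matrix.of_apply]
    rw [hBT, hBSh1]
  · intro j _ hj
    obtain ⟨m, rfl⟩ := Fin.exists_castSucc_eq.mpr hj
    have : (B * T) (Fin.last N) m.castSucc = 0 := by
      rw [hBT, hBSh1, hB, hB, sub_self]
    rw [this]; ring
  · simp

lemma aux_integrable (N : ℕ) (a b : Fin N → ℝ) (c : Fin N → ℂ) :
    IntegrableOn (fun x' : Fin N → ℝ => ∏ m, Complex.exp (c m * x' m))
      (Set.univ.pi fun m => Set.Ioo (a m) (b m)) := by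
  have hSmeas : MeasurableSet (Set.univ.pi fun m => Set.Ioo (a m) (b m)) :=
    MeasurableSet.univ_pi fun m => measurableSet_Ioo
  have hind : (Set.indicator (Set.univ.pi fun m => Set.Ioo (a m) (b m))
      fun x' : Fin N → ℝ => ∏ m, Complex.exp (c m * x' m))
      = fun x' => ∏ m, Set.indicator (Set.Ioo (a m) (b m))
          (fun t : ℝ => Complex.exp (c m * t)) (x' m) := by
    funext x'
    by_cases h : x' ∈ Set.univ.pi fun m => Set.Ioo (a m) (b m)
    · rw [Set.indicator_of_mem h]
      refine Finset.prod_congr rfl fun m _ => ?_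
      have hm : x' m ∈ Set.Ioo (a m) (b m) := h m (Set.mem_univ m)
      rw [Set.indicator_of_mem hm]
    · rw [Set.indicator_of_notMem h]
      rw [Set.mem_pi] at h
      push_neg at h
      obtain ⟨m, _, hm⟩ := h
      exact (Finset.prod_eq_zero (Finset.mem_univ m)
        (Set.indicator_of_notMem hm _)).symm
  have hgi : ∀ m : Fin N, Integrable (Set.indicator (Set.Ioo (a m) (b m))
      (fun t : ℝ => Complex.exp (c m * t))) := by
    intro m
    rw [integrable_indicator_iff measurableSet_Ioo]
    exact ((Complex.continuous_exp.comp
      (continuous_const.mul Complex.continuous_ofReal)).integrableOn_Icc).mono_set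
      Set.Ioo_subset_Icc_self
  have := MeasureTheory.Integrable.fintype_prod
    (f := fun m : Fin N => Set.indicator (Set.Ioo (a m) (b m))
      (fun t : ℝ => Complex.exp (c m * t))) hgi
  rw [← hind] at this
  exact (integrable_indicator_iff hSmeas).mp this

lemma aux_integral (N : ℕ) (a b : Fin N → ℝ) (hab : ∀ m, a m ≤ b m)
    (c : Fin N → ℂ) (hc : ∀ m, c m ≠ 0) :
    ∫ x' in Set.univ.pi fun m => Set.Ioo (a m) (b m), ∏ m, Complex.exp (c m * x' m)
      = ∏ m, (Complex.exp (c m * b m) - Complex.exp (c m * a m)) / c m := by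
  have hSmeas : MeasurableSet (Set.univ.pi fun m => Set.Ioo (a m) (b m)) :=
    MeasurableSet.univ_pi fun m => measurableSet_Ioo
  have hind : (Set.indicator (Set.univ.pi fun m => Set.Ioo (a m) (b m))
      fun x' : Fin N → ℝ => ∏ m, Complex.exp (c m * x' m))
      = fun x' => ∏ m, Set.indicator (Set.Ioo (a m) (b m))
          (fun t : ℝ => Complex.exp (c m * t)) (x' m) := by
    funext x'
    by_cases h : x' ∈ Set.univ.pi fun m => Set.Ioo (a m) (b m)
    · rw [Set.indicator_of_mem h]
      refine Finset.prod_congr rfl fun m _ => ?_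
      have hm : x' m ∈ Set.Ioo (a m) (b m) := h m (Set.mem_univ m)
      rw [Set.indicator_of_mem hm]
    · rw [Set.indicator_of_notMem h]
      rw [Set.mem_pi] at h
      push_neg at h
      obtain ⟨m, _, hm⟩ := h
      exact (Finset.prod_eq_zero (Finset.mem_univ m)
        (Set.indicator_of_notMem hm _)).symm
  rw [← MeasureTheory.integral_indicator hSmeas, hind,
    MeasureTheory.integral_fintype_prod_volume_eq_prod]
  refine Finset.prod_congr rfl fun m _ => ?_
  rw [MeasureTheory.integral_indicator measurableSet_Ioo,
    ← MeasureTheory.integral_Ioc_eq_integral_Ioo,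
    ← intervalIntegral.integral_of_le (hab m)]
  exact integral_exp_mul_complex (hc m)

end Aux

theorem stmt_18 (N : ℕ) (x : Fin (N + 1) → ℝ) (k : Fin (N + 1) → ℝ)
    (hx : ∀ i j : Fin (N + 1), i < j → x j < x i)
    (hk : ∀ i j : Fin (N + 1), i ≠ j → k i ≠ k j) :
    ∫ x' in {x' : Fin N → ℝ | ∀ i : Fin N, x i.succ < x' i ∧ x' i < x i.castSucc},
        (Matrix.det (Matrix.of fun n m : Fin N =>
            Complex.exp (Complex.I * (k n.castSucc : ℂ) * (x' m : ℂ))))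
          * Complex.exp (Complex.I * (k (Fin.last N) : ℂ)
              * (((∑ i : Fin (N + 1), x i : ℝ) : ℂ) - ((∑ m : Fin N, x' m : ℝ) : ℂ)))
      = (∏ n : Fin N,
            (Complex.I * (k n.castSucc : ℂ) - Complex.I * (k (Fin.last N) : ℂ)))⁻¹
          * Matrix.det (Matrix.of fun n m : Fin (N + 1) =>
              Complex.exp (Complex.I * (k n : ℂ) * (x m : ℂ))) := by
  classical
  have hSeq : {x' : Fin N → ℝ | ∀ i : Fin N, x i.succ < x' i ∧ x' i < x i.castSucc}
      = Set.univ.pi (fun m : Fin N => Set.Ioo (x m.succ) (x m.castSucc)) := by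
    ext x'
    simp [Set.mem_pi]
  set c : Fin N → ℂ :=
    fun n => Complex.I * (k n.castSucc : ℂ) - Complex.I * (k (Fin.last N) : ℂ) with hcdef
  have hc0 : ∀ n, c n ≠ 0 := by
    intro n
    have hkne : (k n.castSucc : ℂ) ≠ (k (Fin.last N) : ℂ) := by
      exact_mod_cast hk _ _ (Fin.ne_of_lt (Fin.castSucc_lt_last n))
    have : c n = Complex.I * ((k n.castSucc : ℂ) - (k (Fin.last N) : ℂ)) := by
      rw [hcdef]; ring
    rw [this]
    exact mul_ne_zero Complex.I_ne_zero (sub_ne_zero.mpr hkne)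
  have hab : ∀ m : Fin N, x m.succ ≤ x m.castSucc :=
    fun m => (hx m.castSucc m.succ (Fin.castSucc_lt_succ (i := m))).le
  have hintegrand : ∀ x' : Fin N → ℝ,
      (Matrix.det (Matrix.of fun n m : Fin N =>
          Complex.exp (Complex.I * (k n.castSucc : ℂ) * (x' m : ℂ))))
        * Complex.exp (Complex.I * (k (Fin.last N) : ℂ)
            * (((∑ i : Fin (N + 1), x i : ℝ) : ℂ) - ((∑ m : Fin N, x' m : ℝ) : ℂ)))
      = ∑ σ : Equiv.Perm (Fin N),
          (((Equiv.Perm.sign σ : ℤ) : ℂ)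
              * Complex.exp (Complex.I * (k (Fin.last N) : ℂ)
                  * ((∑ i : Fin (N + 1), x i : ℝ) : ℂ)))
            * ∏ m, Complex.exp (c (σ m) * (x' m : ℂ)) := by
    intro x'
    rw [Matrix.det_apply', Finset.sum_mul]
    refine Finset.sum_congr rfl fun σ _ => ?_
    simp only [Matrix.of_apply]
    have hPQ : (∏ m, Complex.exp (Complex.I * (k (σ m).castSucc : ℂ) * (x' m : ℂ)))
        * Complex.exp (Complex.I * (k (Fin.last N) : ℂ)
            * (((∑ i : Fin (N + 1), x i : ℝ) : ℂ) - ((∑ m : Fin N, x' m : ℝ) : ℂ)))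
        = Complex.exp (Complex.I * (k (Fin.last N) : ℂ)
            * ((∑ i : Fin (N + 1), x i : ℝ) : ℂ))
          * ∏ m, Complex.exp (c (σ m) * (x' m : ℂ)) := by
      rw [← Complex.exp_sum, ← Complex.exp_sum, ← Complex.exp_add, ← Complex.exp_add]
      congr 1
      push_cast
      simp only [hcdef, sub_mul, Finset.sum_sub_distrib, mul_sub, Finset.mul_sum]
      ring
    rw [mul_assoc, hPQ, ← mul_assoc]
  rw [hSeq]
  simp_rw [hintegrand]
  rw [MeasureTheory.integral_finset_sum _ (fun σ _ =>
    ((aux_integrable N (fun m => x m.succ) (fun m => x m.castSucc)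
      (fun m => c (σ m))).const_mul _))]
  have hstep : ∀ σ : Equiv.Perm (Fin N),
      ∫ x' in Set.univ.pi fun m : Fin N => Set.Ioo (x m.succ) (x m.castSucc),
        (((Equiv.Perm.sign σ : ℤ) : ℂ)
            * Complex.exp (Complex.I * (k (Fin.last N) : ℂ)
                * ((∑ i : Fin (N + 1), x i : ℝ) : ℂ)))
          * ∏ m, Complex.exp (c (σ m) * (x' m : ℂ))
      = (((Equiv.Perm.sign σ : ℤ) : ℂ)
            * Complex.exp (Complex.I * (k (Fin.last N) : ℂ)
                * ((∑ i : Fin (N + 1), x i : ℝ) : ℂ)))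
          * ((∏ m, (Complex.exp (c (σ m) * (x m.castSucc : ℝ))
                - Complex.exp (c (σ m) * (x m.succ : ℝ)))) * (∏ n, c n)⁻¹) := by
    intro σ
    rw [MeasureTheory.integral_const_mul,
      aux_integral N (fun m => x m.succ) (fun m => x m.castSucc) hab
        (fun m => c (σ m)) (fun m => hc0 (σ m))]
    congr 1
    rw [Finset.prod_div_distrib, div_eq_mul_inv]
    congr 1
    exact congrArg _ (Equiv.prod_comp σ c)
  simp_rw [hstep]
  -- Now pure algebra
  set E : ℂ := Complex.exp (Complex.I * (k (Fin.last N) : ℂ)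
      * ((∑ i : Fin (N + 1), x i : ℝ) : ℂ)) with hE
  set D : Matrix (Fin N) (Fin N) ℂ := Matrix.of fun n m =>
    Complex.exp (c n * (x m.castSucc : ℝ)) - Complex.exp (c n * (x m.succ : ℝ)) with hD
  have hdetA : Matrix.det (Matrix.of fun n m : Fin (N + 1) =>
      Complex.exp (Complex.I * (k n : ℂ) * (x m : ℂ))) = E * D.det := by
    have h1 : (Matrix.of fun n m : Fin (N + 1) =>
        Complex.exp (Complex.I * (k n : ℂ) * (x m : ℂ)))
        = Matrix.of (fun n m : Fin (N + 1) =>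
            (fun m => Complex.exp (Complex.I * (k (Fin.last N) : ℂ) * (x m : ℂ))) m
            * Complex.exp ((Complex.I * (k n : ℂ)
                - Complex.I * (k (Fin.last N) : ℂ)) * (x m : ℂ))) := by
      ext n m
      simp only [Matrix.of_apply]
      rw [← Complex.exp_add]
      congr 1
      ring
    rw [h1]
    refine (Matrix.det_mul_row (fun m => Complex.exp (Complex.I * (k (Fin.last N) : ℂ) * (x m : ℂ)))
      (Matrix.of fun n m : Fin (N + 1) => Complex.exp ((Complex.I * (k n : ℂ)
        - Complex.I * (k (Fin.last N) : ℂ)) * (x m : ℂ)))).trans ?_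
    congr 1
    · rw [← Complex.exp_sum]
      congr 1
      rw [← Finset.mul_sum]
      congr 1
      push_cast
      try ring
    · rw [aux_det_col N _ (fun m => by simp)]; rfl
  rw [hdetA, Matrix.det_apply', Finset.mul_sum, Finset.mul_sum]
  refine Finset.sum_congr rfl fun σ _ => ?_
  simp only [hD, Matrix.of_apply]
  ring
end
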